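/- Let a₀ > 0, K > 0, D < 0, φ₀' ∈ ℝ. Define a(t) = sqrt(a₀² + t²), H(t) = a'(t)/a(t), and φ₁(t) = φ₀' + (2/(√3·K))·( −(sqrt(3a₀² + DK²)/a₀)·artanh( sqrt(3a₀² + DK²)·t/(a₀·sqrt(−DK² + 3t²)) ) + √3·log(3t + sqrt(−3DK² + 9t²)) ) and v₁(t) = (3(4t² + 3a₀²) − DK²)/(3K²(a₀² + t²)²). Assume 3a₀² + DK² > 0. Then for all t ∈ ℝ: (1) φ₁'(t)² = −(2/K²)(H'(t) − 1/a(t)²) − 4D/(3 a(t)⁴) (equation (3.4) with n = 4, k = 1), and (2) v₁(t) = (3/K²)(H(t)² + H'(t)/3 + 2/(3 a(t)²)) − D/(3 a(t)⁴) (equation (3.5) with n = 4, k = 1); consequently, with ρ_T = φ₁'²/2 + v₁ + D/a⁴ and p_T = φ₁'²/2 − v₁ + D/(3a⁴), both Einstein equations H² + 1/a² = (K²/3)ρ_T and a''/a = −(K²/6)(ρ_T + 3p_T) hold. -/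

import Mathlib

open Real

noncomputable def artanh (x : ℝ) : ℝ := Real.log ((1 + x) / (1 - x)) / 2

lemma hasDerivAt_artanh {x : ℝ} (h : x ^ 2 < 1) :
    HasDerivAt _root_.artanh (1 / (1 - x ^ 2)) x := by
  have h1 : 0 < 1 - x := by nlinarith [sq_nonneg x]
  have h2 : 0 < 1 + x := by nlinarith [sq_nonneg x]
  have hf : HasDerivAt (fun y : ℝ => (1 + y) / (1 - y))
      ((1 * (1 - x) - (1 + x) * (0 - 1)) / (1 - x) ^ 2) x := by
    have hn : HasDerivAt (fun y : ℝ => 1 + y) 1 x := by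
      simpa using (hasDerivAt_id x).const_add (1 : ℝ)
    have hd : HasDerivAt (fun y : ℝ => 1 - y) (0 - 1) x := by
      exact (hasDerivAt_const x (1:ℝ)).sub (hasDerivAt_id' x)
    exact hn.div hd (by linarith)
  have hfx : (1 + x) / (1 - x) ≠ 0 := by positivity
  have hlog := (hf.log hfx).div_const 2
  have : _root_.artanh = fun y : ℝ => Real.log ((1 + y) / (1 - y)) / 2 := rfl
  rw [this]
  refine hlog.congr_deriv ?_
  have hne : (1 : ℝ) - x ^ 2 ≠ 0 := by nlinarith
  field_simp
  ring

set_option maxHeartbeats 1000000 in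
theorem ozer_taha_nonzero_D
    (a₀ K D φ₀' : ℝ) (ha₀ : 0 < a₀) (hK : 0 < K) (hD : D < 0)
    (hpos : 0 < 3 * a₀ ^ 2 + D * K ^ 2)
    (a H φ₁ v₁ ρT pT : ℝ → ℝ)
    (ha : a = fun t => Real.sqrt (a₀ ^ 2 + t ^ 2))
    (hH : H = fun t => deriv a t / a t)
    (hφ₁ : φ₁ = fun t => φ₀' + 2 / (Real.sqrt 3 * K) *
      (-(Real.sqrt (3 * a₀ ^ 2 + D * K ^ 2)) / a₀ *
        _root_.artanh (Real.sqrt (3 * a₀ ^ 2 + D * K ^ 2) * t /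
          (a₀ * Real.sqrt (-(D * K ^ 2) + 3 * t ^ 2))) +
       Real.sqrt 3 * Real.log (3 * t + Real.sqrt (-(3 * D * K ^ 2) + 9 * t ^ 2))))
    (hv₁ : v₁ = fun t => (3 * (4 * t ^ 2 + 3 * a₀ ^ 2) - D * K ^ 2) /
      (3 * K ^ 2 * (a₀ ^ 2 + t ^ 2) ^ 2))
    (hρ : ρT = fun t => (deriv φ₁ t) ^ 2 / 2 + v₁ t + D / a t ^ 4)
    (hp : pT = fun t => (deriv φ₁ t) ^ 2 / 2 - v₁ t + D / (3 * a t ^ 4)) :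
    ∀ t : ℝ,
      (deriv φ₁ t) ^ 2
        = -(2 / K ^ 2) * (deriv H t - 1 / a t ^ 2) - 4 * D / (3 * a t ^ 4) ∧
      v₁ t = 3 / K ^ 2 * (H t ^ 2 + deriv H t / 3 + 2 / (3 * a t ^ 2))
        - D / (3 * a t ^ 4) ∧
      H t ^ 2 + 1 / a t ^ 2 = K ^ 2 / 3 * ρT t ∧
      deriv (deriv a) t / a t = -(K ^ 2 / 6) * (ρT t + 3 * pT t) := by
  intro t
  have hK2 : (0:ℝ) < K ^ 2 := by positivity
  have hq : 0 < -(D * K ^ 2) := by nlinarith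
  have hP : (0:ℝ) < a₀ ^ 2 + t ^ 2 := by positivity
  obtain ⟨sP, hsPdef⟩ : ∃ x : ℝ, x = Real.sqrt (a₀ ^ 2 + t ^ 2) := ⟨_, rfl⟩
  have hsP0 : 0 < sP := hsPdef ▸ Real.sqrt_pos.mpr hP
  have hsP2 : sP ^ 2 = a₀ ^ 2 + t ^ 2 := hsPdef ▸ Real.sq_sqrt hP.le
  obtain ⟨s, hsdef⟩ : ∃ x : ℝ, x = Real.sqrt (-(D * K ^ 2) + 3 * t ^ 2) := ⟨_, rfl⟩
  have hs0 : 0 < s := hsdef ▸ Real.sqrt_pos.mpr (by nlinarith)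
  have hs2 : s ^ 2 = -(D * K ^ 2) + 3 * t ^ 2 := hsdef ▸ Real.sq_sqrt (by nlinarith)
  obtain ⟨c, hcdef⟩ : ∃ x : ℝ, x = Real.sqrt (3 * a₀ ^ 2 + D * K ^ 2) := ⟨_, rfl⟩
  have hc2 : c ^ 2 = 3 * a₀ ^ 2 + D * K ^ 2 := hcdef ▸ Real.sq_sqrt hpos.le
  obtain ⟨r3, hr3def⟩ : ∃ x : ℝ, x = Real.sqrt 3 := ⟨_, rfl⟩
  have hr30 : 0 < r3 := hr3def ▸ Real.sqrt_pos.mpr (by norm_num)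
  have hr32 : r3 ^ 2 = 3 := hr3def ▸ Real.sq_sqrt (by norm_num)
  have hw : Real.sqrt (-(3 * D * K ^ 2) + 9 * t ^ 2) = r3 * s := by
    rw [hsdef, hr3def,
      show -(3 * D * K ^ 2) + 9 * t ^ 2 = 3 * (-(D * K ^ 2) + 3 * t ^ 2) by ring,
      Real.sqrt_mul (by norm_num : (0:ℝ) ≤ 3)]
  -- derivative of a
  have haD : ∀ x : ℝ, HasDerivAt a (x / Real.sqrt (a₀ ^ 2 + x ^ 2)) x := by
    intro x
    have hx : (0:ℝ) < a₀ ^ 2 + x ^ 2 := by positivity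
    have h1 : HasDerivAt (fun y : ℝ => a₀ ^ 2 + y ^ 2) (2 * x) x := by
      simpa using ((hasDerivAt_pow 2 x).const_add (a₀ ^ 2))
    have h2 := h1.sqrt (ne_of_gt hx)
    rw [ha]
    convert h2 using 1
    have : Real.sqrt (a₀ ^ 2 + x ^ 2) ≠ 0 := ne_of_gt (Real.sqrt_pos.mpr hx)
    field_simp
  have hda : deriv a = fun x => x / Real.sqrt (a₀ ^ 2 + x ^ 2) :=
    funext fun x => (haD x).deriv
  have hHf : H = fun x => x / (a₀ ^ 2 + x ^ 2) := by
    rw [hH, hda, ha]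
    funext x
    have hx : (0:ℝ) < a₀ ^ 2 + x ^ 2 := by positivity
    simp only
    rw [div_div, Real.mul_self_sqrt hx.le]
  have hHt : H t = t / (a₀ ^ 2 + t ^ 2) := by rw [hHf]
  have hPD : HasDerivAt (fun y : ℝ => a₀ ^ 2 + y ^ 2) (2 * t) t := by
    simpa using ((hasDerivAt_pow 2 t).const_add (a₀ ^ 2))
  have hHd : HasDerivAt H ((a₀ ^ 2 - t ^ 2) / (a₀ ^ 2 + t ^ 2) ^ 2) t := by
    rw [hHf]
    have := (hasDerivAt_id t).div hPD (ne_of_gt hP)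
    refine HasDerivAt.congr_deriv (by exact this) ?_
    simp only [id_eq]
    field_simp
    ring
  have hderivH : deriv H t = (a₀ ^ 2 - t ^ 2) / (a₀ ^ 2 + t ^ 2) ^ 2 := hHd.deriv
  -- second derivative of a
  have hsPD : HasDerivAt (fun x : ℝ => Real.sqrt (a₀ ^ 2 + x ^ 2)) (t / sP) t := by
    have h2 := hPD.sqrt (ne_of_gt hP)
    convert h2 using 1
    rw [hsPdef]
    have : Real.sqrt (a₀ ^ 2 + t ^ 2) ≠ 0 := ne_of_gt (Real.sqrt_pos.mpr hP)
    field_simp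
  have hdda : deriv (deriv a) t = a₀ ^ 2 / (sP * (a₀ ^ 2 + t ^ 2)) := by
    rw [hda]
    have h2 := ((hasDerivAt_id t).div hsPD
      (by rw [← hsPdef]; exact ne_of_gt hsP0)).deriv
    simp only [id_eq, one_mul, Pi.div_def] at h2
    rw [← hsPdef] at h2
    rw [h2]
    have e1 : sP - t * (t / sP) = a₀ ^ 2 / sP := by
      field_simp
      linear_combination hsP2
    rw [e1, div_div, hsP2]
  -- values of a
  have hat : a t = sP := by rw [ha, hsPdef]
  have hat2 : a t ^ 2 = a₀ ^ 2 + t ^ 2 := by rw [hat]; exact hsP2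
  have hat4 : a t ^ 4 = (a₀ ^ 2 + t ^ 2) ^ 2 := by
    rw [show (4:ℕ) = 2 * 2 from rfl, pow_mul, hat2]
  -- derivative of the inner sqrt in φ₁
  have hsD : HasDerivAt (fun x : ℝ => Real.sqrt (-(D * K ^ 2) + 3 * x ^ 2)) (3 * t / s) t := by
    have h1 : HasDerivAt (fun y : ℝ => -(D * K ^ 2) + 3 * y ^ 2) (3 * (2 * t)) t := by
      simpa using ((hasDerivAt_pow 2 t).const_mul (3:ℝ)).const_add (-(D * K ^ 2))
    have h2 := h1.sqrt (by nlinarith : -(D * K ^ 2) + 3 * t ^ 2 ≠ 0)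
    convert h2 using 1
    rw [hsdef]
    have : Real.sqrt (-(D * K ^ 2) + 3 * t ^ 2) ≠ 0 := hsdef ▸ ne_of_gt hs0
    field_simp
  have hden0 : a₀ * s ≠ 0 := by positivity
  have huD : HasDerivAt (fun x : ℝ => c * x / (a₀ * Real.sqrt (-(D * K ^ 2) + 3 * x ^ 2)))
      ((c * (a₀ * s) - c * t * (a₀ * (3 * t / s))) / (a₀ * s) ^ 2) t := by
    have hn : HasDerivAt (fun x : ℝ => c * x) c t := by
      simpa using (hasDerivAt_id t).const_mul c
    have hd : HasDerivAt (fun x : ℝ => a₀ * Real.sqrt (-(D * K ^ 2) + 3 * x ^ 2))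
        (a₀ * (3 * t / s)) t := hsD.const_mul a₀
    have h0 := hn.div hd (by rw [← hsdef]; exact hden0)
    rw [← hsdef] at h0
    exact h0
  have hu2 : (c * t / (a₀ * s)) ^ 2 < 1 := by
    rw [div_pow, div_lt_one (by positivity)]
    have key : (a₀ * s) ^ 2 - (c * t) ^ 2 = -(D * K ^ 2) * (a₀ ^ 2 + t ^ 2) := by
      linear_combination a₀ ^ 2 * hs2 - t ^ 2 * hc2
    linarith [mul_pos hq hP]
  have hart : HasDerivAt (fun x : ℝ => _root_.artanh (c * x / (a₀ * Real.sqrt (-(D * K ^ 2) + 3 * x ^ 2))))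
      ((1 / (1 - (c * t / (a₀ * s)) ^ 2)) *
        ((c * (a₀ * s) - c * t * (a₀ * (3 * t / s))) / (a₀ * s) ^ 2)) t := by
    have hu2' : (c * t / (a₀ * Real.sqrt (-(D * K ^ 2) + 3 * t ^ 2))) ^ 2 < 1 := by
      rw [← hsdef]; exact hu2
    have h0 := (_root_.hasDerivAt_artanh hu2').comp t huD
    rw [← hsdef] at h0
    exact h0
  -- log term
  have hWD : HasDerivAt (fun x : ℝ => Real.sqrt (-(3 * D * K ^ 2) + 9 * x ^ 2))
      (9 * t / (r3 * s)) t := by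
    have h1 : HasDerivAt (fun y : ℝ => -(3 * D * K ^ 2) + 9 * y ^ 2) (9 * (2 * t)) t := by
      simpa using ((hasDerivAt_pow 2 t).const_mul (9:ℝ)).const_add (-(3 * D * K ^ 2))
    have h2 := h1.sqrt (by nlinarith : -(3 * D * K ^ 2) + 9 * t ^ 2 ≠ 0)
    convert h2 using 1
    rw [hw]
    have : r3 * s ≠ 0 := by positivity
    field_simp
  have hgD : HasDerivAt (fun x : ℝ => 3 * x + Real.sqrt (-(3 * D * K ^ 2) + 9 * x ^ 2))
      (3 + 9 * t / (r3 * s)) t := by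
    have h1 : HasDerivAt (fun x : ℝ => 3 * x) 3 t := by
      simpa using (hasDerivAt_id t).const_mul (3:ℝ)
    exact h1.add hWD
  have hg0 : 3 * t + Real.sqrt (-(3 * D * K ^ 2) + 9 * t ^ 2) ≠ 0 := by
    rw [hw]
    have h1 : (r3 * s) ^ 2 = -(3 * D * K ^ 2) + 9 * t ^ 2 := by
      rw [mul_pow, hr32, hs2]; ring
    have h2 : 0 < r3 * s := by positivity
    have h3 : 0 < 3 * t + r3 * s := by
      nlinarith [sq_nonneg (r3 * s + 3 * t), sq_nonneg (r3 * s - 3 * t)]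
    exact ne_of_gt h3
  have hlog := hgD.log hg0
  -- assemble φ₁ derivative
  have hφD : HasDerivAt φ₁
      (2 / (r3 * K) *
        (-c / a₀ * ((1 / (1 - (c * t / (a₀ * s)) ^ 2)) *
            ((c * (a₀ * s) - c * t * (a₀ * (3 * t / s))) / (a₀ * s) ^ 2)) +
         r3 * ((3 + 9 * t / (r3 * s)) /
            (3 * t + Real.sqrt (-(3 * D * K ^ 2) + 9 * t ^ 2))))) t := by
    rw [hφ₁]
    simp only [← hr3def, ← hcdef]
    exact (((hart.const_mul (-c / a₀)).add (hlog.const_mul r3)).const_mul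
      (2 / (r3 * K))).const_add φ₀'
  have hg0' : 3 * t + r3 * s ≠ 0 := by rw [← hw]; exact hg0
  have hden : 1 - (c * t / (a₀ * s)) ^ 2
      = (-(D * K ^ 2)) * (a₀ ^ 2 + t ^ 2) / (a₀ * s) ^ 2 := by
    field_simp
    linear_combination a₀ ^ 2 * hs2 - t ^ 2 * hc2
  have hφval : deriv φ₁ t = 2 / (r3 * K) * (s / (a₀ ^ 2 + t ^ 2)) := by
    rw [hφD.deriv, hw, hden]
    have hc2' : -c / a₀ * ((1 / ((-(D * K ^ 2)) * (a₀ ^ 2 + t ^ 2) / (a₀ * s) ^ 2)) *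
        ((c * (a₀ * s) - c * t * (a₀ * (3 * t / s))) / (a₀ * s) ^ 2))
        = -(c ^ 2) / ((a₀ ^ 2 + t ^ 2) * s) := by
      have hDK : D * K ^ 2 ≠ 0 := by nlinarith
      have hPne : a₀ ^ 2 + t ^ 2 ≠ 0 := ne_of_gt hP
      have hsne : s ≠ 0 := ne_of_gt hs0
      have ha₀ne : a₀ ≠ 0 := ne_of_gt ha₀
      field_simp
      rw [show s ^ 2 - t ^ 2 * 3 = -(D * K ^ 2) by linarith [hs2], div_eq_iff (ne_of_lt hD)]
      ring
    rw [hc2', hc2]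
    have e2 : (3 + 9 * t / (r3 * s)) / (3 * t + r3 * s) = 3 / (r3 * s) := by
      rw [div_eq_div_iff hg0' (by positivity)]
      field_simp
      ring
    rw [e2]
    have hsne : s ≠ 0 := ne_of_gt hs0
    have hPne : a₀ ^ 2 + t ^ 2 ≠ 0 := ne_of_gt hP
    have hr3ne : r3 ≠ 0 := ne_of_gt hr30
    have hKne : K ≠ 0 := ne_of_gt hK
    field_simp
    linear_combination -hs2
  have hφsq : deriv φ₁ t ^ 2
      = 4 * (-(D * K ^ 2) + 3 * t ^ 2) / (3 * (K ^ 2 * (a₀ ^ 2 + t ^ 2) ^ 2)) := by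
    rw [hφval, mul_pow, div_pow, div_pow, mul_pow, hs2, hr32]
    have hKne : K ≠ 0 := ne_of_gt hK
    have hPne : a₀ ^ 2 + t ^ 2 ≠ 0 := ne_of_gt hP
    field_simp
    ring
  refine ⟨?_, ?_, ?_, ?_⟩
  · rw [hφsq, hderivH, hat4, hat2]
    have hKne : K ≠ 0 := ne_of_gt hK
    have hPne : a₀ ^ 2 + t ^ 2 ≠ 0 := ne_of_gt hP
    field_simp
    ring
  · rw [hv₁, hHt, hderivH, hat4, hat2]
    have hKne : K ≠ 0 := ne_of_gt hK
    have hPne : a₀ ^ 2 + t ^ 2 ≠ 0 := ne_of_gt hP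
    field_simp
    ring
  · rw [hρ]
    simp only
    rw [hφsq, hv₁, hHt, hat4, hat2]
    have hKne : K ≠ 0 := ne_of_gt hK
    have hPne : a₀ ^ 2 + t ^ 2 ≠ 0 := ne_of_gt hP
    field_simp
    ring
  · rw [hρ, hp]
    simp only
    rw [hφsq, hv₁, hdda, hat4, hat]
    have hKne : K ≠ 0 := ne_of_gt hK
    have hPne : a₀ ^ 2 + t ^ 2 ≠ 0 := ne_of_gt hP
    have hsPne : sP ≠ 0 := ne_of_gt hsP0
    rw [div_div]
    have e3 : sP * (a₀ ^ 2 + t ^ 2) * sP = (a₀ ^ 2 + t ^ 2) ^ 2 := by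
      linear_combination (a₀ ^ 2 + t ^ 2) * hsP2
    rw [e3]
    field_simp
    ring
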